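/- Let M ≥ 2 and let H^{[ij]}, for i, j ∈ {1,2,3}, be invertible M × M complex matrices. Define E = (H^{[31]})^{-1} H^{[32]} (H^{[12]})^{-1} H^{[13]} (H^{[23]})^{-1} H^{[21]}, F = (H^{[32]})^{-1} H^{[31]}, and G = (H^{[23]})^{-1} H^{[21]}. Let e_1, …, e_m (1 ≤ m ≤ M) be eigenvectors of E, let V^{[1]} be the M × m matrix with columns e_1, …, e_m, and set V^{[2]} = F V^{[1]}, V^{[3]} = G V^{[1]}. Then the interference alignment equations hold: span(H^{[12]} V^{[2]}) = span(H^{[13]} V^{[3]}), H^{[21]} V^{[1]} = H^{[23]} V^{[3]}, and H^{[31]} V^{[1]} = H^{[32]} V^{[2]}. -/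

import Mathlib

open Matrix

/-- MIMO interference alignment with constant channel matrices: if the columns of
`V¹` are eigenvectors of `E = (H³¹)⁻¹H³²(H¹²)⁻¹H¹³(H²³)⁻¹H²¹` and
`V² = (H³²)⁻¹H³¹ V¹`, `V³ = (H²³)⁻¹H²¹ V¹`, then
`span(H¹²V²) = span(H¹³V³)`, `H²¹V¹ = H²³V³` and `H³¹V¹ = H³²V²`. -/
theorem stmt_13 (M m : ℕ) (hM : 2 ≤ M) (hm1 : 1 ≤ m) (hmM : m ≤ M)
    (H12 H13 H21 H23 H31 H32 : Matrix (Fin M) (Fin M) ℂ)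
    (hu12 : IsUnit H12.det) (hu13 : IsUnit H13.det) (hu21 : IsUnit H21.det)
    (hu23 : IsUnit H23.det) (hu31 : IsUnit H31.det) (hu32 : IsUnit H32.det)
    (e : Fin m → (Fin M → ℂ)) (he0 : ∀ i, e i ≠ 0)
    (heig : ∀ i, ∃ μ : ℂ,
      (H31⁻¹ * H32 * H12⁻¹ * H13 * H23⁻¹ * H21) *ᵥ e i = μ • e i) :
    let V1 : Matrix (Fin M) (Fin m) ℂ := Matrix.of fun i j => e j i
    let V2 := (H32⁻¹ * H31) * V1
    let V3 := (H23⁻¹ * H21) * V1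
    LinearMap.range (H12 * V2).mulVecLin = LinearMap.range (H13 * V3).mulVecLin ∧
    H21 * V1 = H23 * V3 ∧
    H31 * V1 = H32 * V2 := by
  intro V1 V2 V3
  set E := H31⁻¹ * H32 * H12⁻¹ * H13 * H23⁻¹ * H21 with hE
  -- E is invertible
  have huE : IsUnit E.det := by
    rw [hE]
    simp only [Matrix.det_mul]
    exact (((((Matrix.isUnit_nonsing_inv_det H31 hu31).mul hu32).mul
      (Matrix.isUnit_nonsing_inv_det H12 hu12)).mul hu13).mul
      (Matrix.isUnit_nonsing_inv_det H23 hu23)).mul hu21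
  choose μ hμ using heig
  have hμ0 : ∀ i, μ i ≠ 0 := by
    intro i h0
    apply he0 i
    have h1 : E *ᵥ e i = 0 := by rw [hμ i, h0, zero_smul]
    have := congrArg (fun v => E⁻¹ *ᵥ v) h1
    simpa [Matrix.mulVec_mulVec, Matrix.nonsing_inv_mul E huE] using this
  -- key identities
  have hEV1 : E * V1 = V1 * Matrix.diagonal μ := by
    ext i j
    have := congrFun (hμ j) i
    simp only [Matrix.mulVec, dotProduct, Pi.smul_apply, smul_eq_mul] at this
    simp only [Matrix.mul_apply, Matrix.of_apply, Matrix.diagonal_apply, V1,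
      mul_ite, mul_zero, Finset.sum_ite_eq', Finset.mem_univ, if_true]
    rw [this, mul_comm]
  have h21 : H21 * V1 = H23 * V3 := by
    show H21 * V1 = H23 * ((H23⁻¹ * H21) * V1)
    rw [← Matrix.mul_assoc, ← Matrix.mul_assoc, Matrix.mul_nonsing_inv H23 hu23,
      Matrix.one_mul]
  have h31 : H31 * V1 = H32 * V2 := by
    show H31 * V1 = H32 * ((H32⁻¹ * H31) * V1)
    rw [← Matrix.mul_assoc, ← Matrix.mul_assoc, Matrix.mul_nonsing_inv H32 hu32,
      Matrix.one_mul]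
  refine ⟨?_, h21, h31⟩
  -- H13 * V3 = (H12 * V2) * diagonal μ
  have hAE : (H12 * (H32⁻¹ * H31)) * E = H13 * (H23⁻¹ * H21) := by
    rw [hE]
    rw [show H31⁻¹ * H32 * H12⁻¹ * H13 * H23⁻¹ * H21
        = H31⁻¹ * (H32 * (H12⁻¹ * (H13 * (H23⁻¹ * H21)))) by
      simp only [Matrix.mul_assoc]]
    rw [show H12 * (H32⁻¹ * H31) * (H31⁻¹ * (H32 * (H12⁻¹ * (H13 * (H23⁻¹ * H21)))))
        = H12 * (H32⁻¹ * ((H31 * H31⁻¹) * (H32 * (H12⁻¹ * (H13 * (H23⁻¹ * H21)))))) by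
      simp only [Matrix.mul_assoc]]
    rw [Matrix.mul_nonsing_inv H31 hu31, Matrix.one_mul,
      show H12 * (H32⁻¹ * (H32 * (H12⁻¹ * (H13 * (H23⁻¹ * H21)))))
        = H12 * ((H32⁻¹ * H32) * (H12⁻¹ * (H13 * (H23⁻¹ * H21)))) by
      simp only [Matrix.mul_assoc],
      Matrix.nonsing_inv_mul H32 hu32, Matrix.one_mul, ← Matrix.mul_assoc,
      Matrix.mul_nonsing_inv H12 hu12, Matrix.one_mul]
  have hkey : H13 * V3 = (H12 * V2) * Matrix.diagonal μ := by
    show H13 * ((H23⁻¹ * H21) * V1) = (H12 * ((H32⁻¹ * H31) * V1)) * Matrix.diagonal μ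
    rw [← Matrix.mul_assoc, ← hAE, Matrix.mul_assoc, hEV1, ← Matrix.mul_assoc,
      ← Matrix.mul_assoc]
    simp only [Matrix.mul_assoc]
  have hd : IsUnit (Matrix.diagonal μ).det := by
    rw [Matrix.det_diagonal]
    exact isUnit_iff_ne_zero.mpr (Finset.prod_ne_zero_iff.mpr fun i _ => hμ0 i)
  have hDtop : LinearMap.range (Matrix.diagonal μ).mulVecLin = ⊤ := by
    rw [LinearMap.range_eq_top]
    intro v
    refine ⟨(Matrix.diagonal μ)⁻¹ *ᵥ v, ?_⟩
    simp [Matrix.mulVecLin_apply, Matrix.mulVec_mulVec, Matrix.mul_nonsing_inv _ hd]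
  conv_rhs => rw [hkey, Matrix.mulVecLin_mul, LinearMap.range_comp, hDtop,
    Submodule.map_top]
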